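/- For every q with 0 < q < 1 and all integers N, r ≥ 0, A_{N,r}(q) = (1 / C(N + r, r)) · ∏_{j=1}^r (1 − q^{N+j})/(1 − q^j), where C(N + r, r) is the ordinary binomial coefficient. -/

import Mathlib

open MeasureTheory

noncomputable section

open Finset





def Pgauss (q : ℝ) (n r : ℕ) : ℝ := ∑ S ∈ (Finset.range n).powersetCard r, q ^ (∑ s ∈ S, s)

lemma Pgauss_zero (q : ℝ) (n : ℕ) : Pgauss q n 0 = 1 := by
  simp [Pgauss]

lemma Pgauss_of_lt (q : ℝ) {n r : ℕ} (h : n < r) : Pgauss q n r = 0 := by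
  rw [Pgauss, Finset.powersetCard_eq_empty.2 (by simpa using h), Finset.sum_empty]

lemma Pgauss_succ (q : ℝ) (n r : ℕ) :
    Pgauss q (n + 1) (r + 1) = Pgauss q n (r + 1) + q ^ n * Pgauss q n r := by
  have hn : n ∉ Finset.range n := by simp
  rw [Pgauss, Finset.range_add_one, Finset.powersetCard_succ_insert hn, Finset.sum_union]
  · congr 1
    rw [Finset.sum_image, Pgauss, Finset.mul_sum]
    · refine Finset.sum_congr rfl fun S hS => ?_
      have hnS : n ∉ S := fun h => hn ((Finset.mem_powersetCard.1 hS).1 h)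
      rw [Finset.sum_insert hnS, pow_add]
    · intro S hS T hT hST
      have hnS : n ∉ S := fun h => hn ((Finset.mem_powersetCard.1 hS).1 h)
      have hnT : n ∉ T := fun h => hn ((Finset.mem_powersetCard.1 hT).1 h)
      have := congrArg (Finset.erase · n) hST
      simpa [Finset.erase_insert, hnS, hnT] using this
  · rw [Finset.disjoint_left]
    intro S hS hS'
    obtain ⟨T, hT, rfl⟩ := Finset.mem_image.1 hS'
    exact hn ((Finset.mem_powersetCard.1 hS).1 (Finset.mem_insert_self n T))

lemma one_sub_pow_ne {q : ℝ} (hq0 : 0 < q) (hq1 : q < 1) (k : ℕ) : 1 - q ^ (k + 1) ≠ 0 := by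
  have : q ^ (k + 1) < 1 := pow_lt_one₀ hq0.le hq1 (Nat.succ_ne_zero k)
  linarith

lemma Pgauss_eq {q : ℝ} (hq0 : 0 < q) (hq1 : q < 1) :
    ∀ r N : ℕ, Pgauss q (N + r) r =
      q ^ (r.choose 2) * ∏ j ∈ Finset.range r, (1 - q ^ (N + j + 1)) / (1 - q ^ (j + 1)) := by
  intro r
  induction r with
  | zero => intro N; simp [Pgauss_zero]
  | succ r ih =>
    have hden : ∀ m : ℕ, (∏ j ∈ Finset.range m, (1 - q ^ (j + 1))) ≠ 0 :=
      fun m => Finset.prod_ne_zero_iff.2 fun j _ => one_sub_pow_ne hq0 hq1 j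
    have prodsplit : ∀ M : ℕ, ∏ j ∈ Finset.range (r + 1), (1 - q ^ (M + 1 + j + 1)) / (1 - q ^ (j + 1))
        = (∏ j ∈ Finset.range (r+1), (1 - q ^ (M + 1 + j + 1))) / (∏ j ∈ Finset.range (r+1), (1 - q ^ (j + 1))) :=
      fun M => Finset.prod_div_distrib _ _
    intro N
    induction N with
    | zero =>
      have h0 : ∀ m : ℕ, Pgauss q (0 + m) m = q ^ (m.choose 2) := by
        intro m
        induction m with
        | zero => simp [Pgauss_zero]
        | succ m ihm =>
          have : Pgauss q (0 + (m+1)) (m+1) = Pgauss q m (m+1) + q ^ m * Pgauss q m m := by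
            simpa using Pgauss_succ q m m
          rw [this, Pgauss_of_lt q (Nat.lt_succ_self m), zero_add] at *
          rw [ihm]
          rw [show (m+1).choose 2 = m.choose 2 + m by
            rw [Nat.choose_succ_succ, Nat.choose_one_right, Nat.add_comm]]
          ring
      rw [h0 (r+1)]
      have : ∀ j ∈ Finset.range (r+1), (1 - q ^ (0 + j + 1)) / (1 - q ^ (j + 1)) = 1 :=
        fun j _ => by rw [Nat.zero_add]; exact div_self (one_sub_pow_ne hq0 hq1 j)
      rw [Finset.prod_congr rfl this]
      simp
    | succ N ihN =>
      have key : Pgauss q ((N + 1) + (r + 1)) (r + 1)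
          = Pgauss q (N + (r + 1)) (r + 1) + q ^ (N + 1 + r) * Pgauss q ((N + 1) + r) r := by
        have h := Pgauss_succ q (N + 1 + r) r
        rw [show N + 1 + (r + 1) = (N + 1 + r) + 1 by ring, h,
          show N + 1 + r = N + (r + 1) by ring]
      rw [key, ihN, ih (N + 1)]
      have hX : ∏ j ∈ Finset.range (r + 1), (1 - q ^ (N + 1 + j + 1))
          = (1 - q ^ (N + 1 + r + 1)) * ∏ j ∈ Finset.range r, (1 - q ^ (N + 1 + j + 1)) := by
        rw [Finset.prod_range_succ]; ring
      have hY : ∏ j ∈ Finset.range (r + 1), (1 - q ^ (N + j + 1))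
          = (1 - q ^ (N + 1)) * ∏ j ∈ Finset.range r, (1 - q ^ (N + 1 + j + 1)) := by
        rw [Finset.prod_range_succ' (fun j => (1 - q ^ (N + j + 1))) r, mul_comm]
        congr 1
        exact Finset.prod_congr rfl fun j _ => by ring_nf
      have hD : ∏ j ∈ Finset.range (r + 1), (1 - q ^ (j + 1))
          = (∏ j ∈ Finset.range r, (1 - q ^ (j + 1))) * (1 - q ^ (r + 1)) := by
        rw [Finset.prod_range_succ]
      have hc : (r+1).choose 2 = r.choose 2 + r := by
        rw [Nat.choose_succ_succ, Nat.choose_one_right, Nat.add_comm]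
      rw [Finset.prod_div_distrib, Finset.prod_div_distrib, Finset.prod_div_distrib,
        hX, hY, hD, hc]
      have h1 : (∏ j ∈ Finset.range r, (1 - q ^ (j + 1))) ≠ 0 := hden r
      have h2 : (1 : ℝ) - q ^ (r + 1) ≠ 0 := one_sub_pow_ne hq0 hq1 r
      field_simp
      ring


lemma sum_rank {α : Type*} [LinearOrder α] {r : ℕ} (f : Fin r → α) (hf : Function.Injective f) :
    ∑ u : Fin r, (Finset.univ.filter fun v => f v < f u).card = r.choose 2 := by
  classical
  have hcard : ∀ u : Fin r, (Finset.univ.filter fun v => f v < f u).card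
      = ∑ v : Fin r, (if f v < f u then 1 else 0) := fun u => Finset.card_filter _ _
  have hswap : ∑ u : Fin r, ∑ v : Fin r, (if f u < f v then 1 else 0)
      = ∑ u : Fin r, ∑ v : Fin r, (if f v < f u then 1 else 0) := Finset.sum_comm
  have key : ∑ u : Fin r, ∑ v : Fin r, (if f v < f u then 1 else 0)
      + ∑ u : Fin r, ∑ v : Fin r, (if f u < f v then 1 else 0)
      = r * r - r := by
    rw [← Finset.sum_add_distrib]
    simp_rw [← Finset.sum_add_distrib]
    have h1 : ∀ u v : Fin r, ((if f v < f u then 1 else 0) + if f u < f v then 1 else 0)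
        = if v = u then 0 else 1 := by
      intro u v
      by_cases e : v = u
      · subst e; simp
      · have hne : f v ≠ f u := fun h => e (hf h)
        rcases hne.lt_or_gt with h | h
        · simp [h, not_lt.2 h.le, e]
        · simp [h.not_gt, h, e]
    simp_rw [h1]
    have h2 : ∀ u : Fin r, ∑ v : Fin r, (if v = u then (0:ℕ) else 1) = r - 1 := by
      intro u
      have ha : ∑ v : Fin r, ((if v = u then (0:ℕ) else 1) + if v = u then 1 else 0)
          = r := by
        have : ∀ v : Fin r, ((if v = u then (0:ℕ) else 1) + if v = u then 1 else 0) = 1 := by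
          intro v; by_cases e : v = u <;> simp [e]
        simp_rw [this]; simp
      rw [Finset.sum_add_distrib, Finset.sum_ite_eq' Finset.univ u (fun _ => (1:ℕ))] at ha
      simp only [Finset.mem_univ, if_true] at ha
      omega
    simp_rw [h2]
    rcases Nat.eq_zero_or_pos r with h | h
    · subst h; simp
    · simp [Finset.sum_const, Nat.mul_sub, mul_one]
  have hch : 2 * r.choose 2 = r * r - r := by
    have h2 : r.choose 2 * 2 = r * (r-1) := by
      rw [Nat.choose_two_right, Nat.div_mul_cancel (Nat.even_mul_pred_self r).two_dvd]
    rw [Nat.mul_sub, mul_one] at h2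
    omega
  simp_rw [hcard]
  omega

variable {N r : ℕ}

def cPerm (N r : ℕ) (τ : Equiv.Perm (Fin (N+r))) : ℕ :=
  (Finset.univ.filter fun p : Fin N × Fin r =>
    τ (Fin.castAdd r p.1) < τ (Fin.natAdd N p.2)).card

def permSet (N r : ℕ) (τ : Equiv.Perm (Fin (N+r))) : Finset (Fin (N+r)) :=
  Finset.image (fun u => τ (Fin.natAdd N u)) Finset.univ

lemma natAdd_inj (τ : Equiv.Perm (Fin (N+r))) :
    Function.Injective (fun u : Fin r => τ (Fin.natAdd N u)) :=
  fun a b h => by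
    have h2 := congrArg Fin.val (τ.injective h)
    simp only [Fin.coe_natAdd] at h2
    exact Fin.ext (by omega)

lemma card_permSet (τ : Equiv.Perm (Fin (N+r))) : (permSet N r τ).card = r := by
  rw [permSet, Finset.card_image_of_injective _ (natAdd_inj τ), Finset.card_univ,
    Fintype.card_fin]

lemma cPerm_add (τ : Equiv.Perm (Fin (N+r))) :
    cPerm N r τ + r.choose 2 = ∑ s ∈ permSet N r τ, (s : ℕ) := by
  classical
  have hval : ∀ u : Fin r,
      (∑ i : Fin N, if τ (Fin.castAdd r i) < τ (Fin.natAdd N u) then 1 else 0)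
      + (Finset.univ.filter fun v : Fin r =>
          τ (Fin.natAdd N v) < τ (Fin.natAdd N u)).card
      = (τ (Fin.natAdd N u) : ℕ) := by
    intro u
    set s := τ (Fin.natAdd N u)
    have h1 : (s : ℕ) = ∑ w : Fin (N+r), if w < s then 1 else 0 := by
      rw [← Finset.card_filter]
      rw [show (Finset.univ.filter fun w => w < s) = Finset.Iio s by ext; simp]
      simp
    set e : Fin N ⊕ Fin r ≃ Fin (N+r) := finSumFinEquiv.trans (τ : Equiv.Perm (Fin (N+r))) with he
    have h2 : ∑ w : Fin (N+r), (if w < s then (1:ℕ) else 0)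
        = ∑ p : Fin N ⊕ Fin r, (if e p < s then 1 else 0) :=
      (Equiv.sum_comp e fun w => if w < s then (1:ℕ) else 0).symm
    have h3 : ∑ p : Fin N ⊕ Fin r, (if e p < s then (1:ℕ) else 0)
        = (∑ i : Fin N, if τ (Fin.castAdd r i) < s then (1:ℕ) else 0)
          + ∑ v : Fin r, if τ (Fin.natAdd N v) < s then (1:ℕ) else 0 := by
      rw [Fintype.sum_sum_type]
      congr 1 <;> exact Finset.sum_congr rfl fun x _ => by simp [he]
    rw [h1, h2, h3, Finset.card_filter]
  -- sum over u
  have hc : cPerm N r τ = ∑ u : Fin r, ∑ i : Fin N,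
      if τ (Fin.castAdd r i) < τ (Fin.natAdd N u) then 1 else 0 := by
    rw [cPerm, Finset.card_filter, Fintype.sum_prod_type, Finset.sum_comm]
  have hrank : ∑ u : Fin r, (Finset.univ.filter fun v : Fin r =>
      τ (Fin.natAdd N v) < τ (Fin.natAdd N u)).card = r.choose 2 :=
    sum_rank _ (natAdd_inj τ)
  have himg : ∑ s ∈ permSet N r τ, (s : ℕ) = ∑ u : Fin r, (τ (Fin.natAdd N u) : ℕ) :=
    Finset.sum_image fun a _ b _ h => natAdd_inj τ h
  rw [hc, himg, ← hrank, ← Finset.sum_add_distrib]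
  exact Finset.sum_congr rfl fun u _ => hval u


variable {N r : ℕ}

def buildPerm (S : Finset (Fin (N+r))) (g : Fin N ≃ {x : Fin (N+r) // ¬ x ∈ S})
    (f : Fin r ≃ {x : Fin (N+r) // x ∈ S}) : Equiv.Perm (Fin (N+r)) :=
  finSumFinEquiv.symm.trans ((Equiv.sumCongr g f).trans
    ((Equiv.sumComm _ _).trans (Equiv.sumCompl (· ∈ S))))

lemma buildPerm_castAdd (S : Finset (Fin (N+r))) (g) (f) (i : Fin N) :
    buildPerm S g f (Fin.castAdd r i) = (g i : Fin (N+r)) := by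
  simp [buildPerm]

lemma buildPerm_natAdd (S : Finset (Fin (N+r))) (g) (f) (u : Fin r) :
    buildPerm S g f (Fin.natAdd N u) = (f u : Fin (N+r)) := by
  simp [buildPerm]

lemma fiber_card (S : Finset (Fin (N+r))) (hS : S.card = r) :
    (Finset.univ.filter fun τ : Equiv.Perm (Fin (N+r)) => permSet N r τ = S).card
      = N.factorial * r.factorial := by
  classical
  rw [← Fintype.card_subtype]
  have hcS : Fintype.card {x : Fin (N+r) // x ∈ S} = r := by
    rw [Fintype.card_coe, hS]
  have hcSc : Fintype.card {x : Fin (N+r) // ¬ x ∈ S} = N := by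
    rw [Fintype.card_subtype_compl, hcS, Fintype.card_fin]; omega
  -- the bijection
  let Φ : (Fin N ≃ {x : Fin (N+r) // ¬ x ∈ S}) × (Fin r ≃ {x : Fin (N+r) // x ∈ S})
      → {τ : Equiv.Perm (Fin (N+r)) // permSet N r τ = S} := fun gf =>
    ⟨buildPerm S gf.1 gf.2, by
      ext x
      simp only [permSet, Finset.mem_image, Finset.mem_univ, true_and]
      constructor
      · rintro ⟨u, rfl⟩
        rw [buildPerm_natAdd]
        exact (gf.2 u).2
      · intro hx
        refine ⟨gf.2.symm ⟨x, hx⟩, ?_⟩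
        rw [buildPerm_natAdd]
        simp⟩
  have hbij : Function.Bijective Φ := by
    constructor
    · rintro ⟨g, f⟩ ⟨g', f'⟩ h
      have h' : buildPerm S g f = buildPerm S g' f' := congrArg Subtype.val h
      have hf : f = f' := by
        apply Equiv.ext; intro u
        refine Subtype.ext ?_
        rw [← buildPerm_natAdd S g f u, ← buildPerm_natAdd S g' f' u, h']
      have hg : g = g' := by
        apply Equiv.ext; intro i
        refine Subtype.ext ?_
        rw [← buildPerm_castAdd S g f i, ← buildPerm_castAdd S g' f' i, h']
      rw [Prod.ext_iff]; exact ⟨hg, hf⟩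
    · rintro ⟨τ, hτ⟩
      have hmemS : ∀ u : Fin r, τ (Fin.natAdd N u) ∈ S := by
        intro u
        rw [← hτ]
        exact Finset.mem_image.2 ⟨u, Finset.mem_univ u, rfl⟩
      have hmemSc : ∀ i : Fin N, ¬ τ (Fin.castAdd r i) ∈ S := by
        intro i hmem
        rw [← hτ] at hmem
        obtain ⟨u, _, hu⟩ := Finset.mem_image.1 hmem
        have := congrArg Fin.val (τ.injective hu)
        simp [Fin.coe_natAdd, Fin.coe_castAdd] at this
        omega
      let f0 : Fin r → {x : Fin (N+r) // x ∈ S} := fun u => ⟨τ (Fin.natAdd N u), hmemS u⟩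
      let g0 : Fin N → {x : Fin (N+r) // ¬ x ∈ S} := fun i => ⟨τ (Fin.castAdd r i), hmemSc i⟩
      have hf0 : Function.Injective f0 := by
        intro a b h
        have := τ.injective (congrArg Subtype.val h)
        have h2 := congrArg Fin.val this
        simp only [Fin.coe_natAdd] at h2
        exact Fin.ext (by omega)
      have hg0 : Function.Injective g0 := by
        intro a b h
        have := τ.injective (congrArg Subtype.val h)
        have h2 := congrArg Fin.val this
        simp only [Fin.coe_castAdd] at h2
        exact Fin.ext h2
      have hf0b : Function.Bijective f0 :=
        (Fintype.bijective_iff_injective_and_card f0).2 ⟨hf0, by rw [hcS, Fintype.card_fin]⟩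
      have hg0b : Function.Bijective g0 :=
        (Fintype.bijective_iff_injective_and_card g0).2 ⟨hg0, by rw [hcSc, Fintype.card_fin]⟩
      refine ⟨⟨Equiv.ofBijective g0 hg0b, Equiv.ofBijective f0 hf0b⟩, ?_⟩
      apply Subtype.ext
      apply Equiv.ext
      intro x
      induction x using Fin.addCases with
      | left i => rw [buildPerm_castAdd]; rfl
      | right u => rw [buildPerm_natAdd]; rfl
  rw [← Fintype.card_of_bijective hbij, Fintype.card_prod,
    Fintype.card_equiv (Fintype.equivFinOfCardEq hcSc).symm,
    Fintype.card_equiv (Fintype.equivFinOfCardEq hcS).symm,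
    Fintype.card_fin, Fintype.card_fin]

lemma powersetCard_univ_image (N r : ℕ) :
    (Finset.range (N+r)).powersetCard r
      = Finset.image (fun S : Finset (Fin (N+r)) => S.image Fin.val)
          (Finset.univ.powersetCard r) := by
  ext T
  simp only [Finset.mem_powersetCard, Finset.mem_image]
  constructor
  · rintro ⟨hsub, hcard⟩
    have hlt : ∀ m ∈ T, m < N + r := fun m hm => Finset.mem_range.1 (hsub hm)
    refine ⟨T.attachFin hlt, ⟨Finset.subset_univ _, by rw [Finset.card_attachFin, hcard]⟩, ?_⟩
    ext m
    simp only [Finset.mem_image]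
    constructor
    · rintro ⟨a, ha, rfl⟩
      exact (Finset.mem_attachFin _).1 ha
    · intro hm
      exact ⟨⟨m, hlt m hm⟩, (Finset.mem_attachFin _).2 hm, rfl⟩
  · rintro ⟨S, ⟨-, hcard⟩, rfl⟩
    constructor
    · intro m hm
      obtain ⟨a, _, rfl⟩ := Finset.mem_image.1 hm
      exact Finset.mem_range.2 a.isLt
    · rw [Finset.card_image_of_injective _ Fin.val_injective, hcard]

lemma Ksum_eq {q : ℝ} (hq0 : 0 < q) (hq1 : q < 1) (N r : ℕ) :
    (∑ τ : Equiv.Perm (Fin (N+r)), q ^ cPerm N r τ)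
      = N.factorial * r.factorial
        * ∏ j ∈ Finset.range r, (1 - q ^ (N + j + 1)) / (1 - q ^ (j + 1)) := by
  classical
  have hqne : q ^ (r.choose 2) ≠ 0 := pow_ne_zero _ hq0.ne'
  have hmaps : ∀ τ : Equiv.Perm (Fin (N+r)), τ ∈ (Finset.univ : Finset (Equiv.Perm (Fin (N+r))))
      → permSet N r τ ∈ Finset.univ.powersetCard r := fun τ _ =>
    Finset.mem_powersetCard.2 ⟨Finset.subset_univ _, card_permSet τ⟩
  have key : q ^ (r.choose 2) * (∑ τ : Equiv.Perm (Fin (N+r)), q ^ cPerm N r τ)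
      = N.factorial * r.factorial * Pgauss q (N+r) r := by
    rw [Finset.mul_sum]
    have step1 : ∀ τ : Equiv.Perm (Fin (N+r)),
        q ^ (r.choose 2) * q ^ cPerm N r τ = q ^ (∑ s ∈ permSet N r τ, (s : ℕ)) := by
      intro τ
      rw [← pow_add, Nat.add_comm, cPerm_add]
    rw [Finset.sum_congr rfl fun τ _ => step1 τ]
    rw [← Finset.sum_fiberwise_of_maps_to hmaps (fun τ => q ^ (∑ s ∈ permSet N r τ, (s : ℕ)))]
    have step2 : ∀ S ∈ Finset.univ.powersetCard r,
        (∑ τ ∈ Finset.univ.filter fun τ : Equiv.Perm (Fin (N+r)) => permSet N r τ = S,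
          q ^ (∑ s ∈ permSet N r τ, (s : ℕ)))
        = (N.factorial * r.factorial : ℝ) * q ^ (∑ s ∈ S, (s : ℕ)) := by
      intro S hS
      have hcongr : ∀ τ ∈ Finset.univ.filter
          fun τ : Equiv.Perm (Fin (N+r)) => permSet N r τ = S,
          q ^ (∑ s ∈ permSet N r τ, (s : ℕ)) = q ^ (∑ s ∈ S, (s : ℕ)) := by
        intro τ hτ
        rw [(Finset.mem_filter.1 hτ).2]
      rw [Finset.sum_congr rfl hcongr, Finset.sum_const,
        fiber_card S (Finset.mem_powersetCard.1 hS).2, nsmul_eq_mul]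
      push_cast
      ring
    rw [Finset.sum_congr rfl step2, ← Finset.mul_sum]
    congr 1
    rw [Pgauss, powersetCard_univ_image N r, Finset.sum_image]
    · exact Finset.sum_congr rfl fun S _ => by rw [Finset.sum_image (fun a _ b _ h
        => Fin.val_injective h)]
    · intro S _ T _ h
      exact Finset.image_injective Fin.val_injective h
  have := Pgauss_eq hq0 hq1 r N
  rw [this] at key
  field_simp at key
  -- key : q^c * Σ = N! * r! * (q^c * ∏)  (up to arrangement)
  have h2 : q ^ (r.choose 2) * (∑ τ : Equiv.Perm (Fin (N+r)), q ^ cPerm N r τ)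
      = q ^ (r.choose 2) * (N.factorial * r.factorial
        * ∏ j ∈ Finset.range r, (1 - q ^ (N + j + 1)) / (1 - q ^ (j + 1))) := by
    rw [key, Finset.prod_div_distrib]
  exact mul_left_cancel₀ hqne h2


/-- `A_{N,r}(q) = ∫_{[0,1]^N} ∫_{[0,1]^r} q^{#{(i,u) : y_u > t_i}} dy dt`. -/
def Aint (q : ℝ) (N r : ℕ) : ℝ :=
  ∫ t in Set.univ.pi fun _ : Fin N => Set.Icc (0 : ℝ) 1,
    ∫ y in Set.univ.pi fun _ : Fin r => Set.Icc (0 : ℝ) 1,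
      q ^ (Finset.univ.filter fun p : Fin N × Fin r => t p.1 < y p.2).card

variable (q : ℝ) (N r : ℕ)

def Fcube (q : ℝ) (N r : ℕ) (x : Fin (N+r) → ℝ) : ℝ :=
  q ^ (Finset.univ.filter fun p : Fin N × Fin r =>
    x (Fin.castAdd r p.1) < x (Fin.natAdd N p.2)).card

def cube (n : ℕ) : Set (Fin n → ℝ) := Set.univ.pi fun _ => Set.Icc (0 : ℝ) 1

lemma measurableSet_cube (n : ℕ) : MeasurableSet (cube n) :=
  MeasurableSet.univ_pi fun _ => measurableSet_Icc

lemma volume_cube (n : ℕ) : volume (cube n) = 1 := by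
  rw [cube, volume_pi_pi]
  simp [Real.volume_Icc]

lemma measurable_Fcube : Measurable (Fcube q N r) := by
  have h : Fcube q N r = fun x => ∏ p : Fin N × Fin r,
      (if x (Fin.castAdd r p.1) < x (Fin.natAdd N p.2) then q else 1) := by
    funext x
    rw [Fcube, Finset.prod_ite, Finset.prod_const, Finset.prod_const, one_pow, mul_one]
  rw [h]
  exact Finset.measurable_prod _ fun p _ =>
    Measurable.ite (measurableSet_lt (measurable_pi_apply _) (measurable_pi_apply _))
      measurable_const measurable_const

lemma Fcube_nonneg (hq0 : 0 < q) (x : Fin (N+r) → ℝ) : 0 ≤ Fcube q N r x :=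
  pow_nonneg hq0.le _

lemma Fcube_le_one (hq0 : 0 < q) (hq1 : q < 1) (x : Fin (N+r) → ℝ) : Fcube q N r x ≤ 1 :=
  pow_le_one₀ hq0.le hq1.le

lemma aint_eq_cube (hq0 : 0 < q) (hq1 : q < 1) :
    Aint q N r = ∫ x in cube (N+r), Fcube q N r x := by
  classical
  set f : (Fin N → ℝ) × (Fin r → ℝ) → ℝ := fun z =>
    q ^ (Finset.univ.filter fun p : Fin N × Fin r => z.1 p.1 < z.2 p.2).card with hf
  have hfm : Measurable f := by
    have h : f = fun z => ∏ p : Fin N × Fin r, (if z.1 p.1 < z.2 p.2 then q else 1) := by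
      funext z
      rw [hf, Finset.prod_ite, Finset.prod_const, Finset.prod_const, one_pow, mul_one]
    rw [h]
    exact Finset.measurable_prod _ fun p _ =>
      Measurable.ite
        (measurableSet_lt (((measurable_pi_apply _).comp measurable_fst : Measurable
            fun z : (Fin N → ℝ) × (Fin r → ℝ) => z.1 p.1))
          (((measurable_pi_apply _).comp measurable_snd : Measurable
            fun z : (Fin N → ℝ) × (Fin r → ℝ) => z.2 p.2)))
        measurable_const measurable_const
  -- measure preserving equivalence
  let E1 := MeasurableEquiv.piCongrLeft (fun _ : Fin (N+r) => ℝ) finSumFinEquiv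
  let E2 := MeasurableEquiv.sumPiEquivProdPi (fun _ : Fin N ⊕ Fin r => ℝ)
  let T := E1.symm.trans E2
  have hT : MeasurePreserving T := by
    exact (volume_measurePreserving_sumPiEquivProdPi (fun _ : Fin N ⊕ Fin r => ℝ)).comp
      (volume_measurePreserving_piCongrLeft (fun _ : Fin (N+r) => ℝ) finSumFinEquiv).symm
  have hTx : ∀ x : Fin (N+r) → ℝ, T x =
      (fun i => x (Fin.castAdd r i), fun u => x (Fin.natAdd N u)) := by
    intro x
    rfl
  have hprod : (volume : Measure ((Fin N → ℝ) × (Fin r → ℝ))) ((cube N) ×ˢ (cube r)) = 1 := by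
    rw [Measure.volume_eq_prod, Measure.prod_prod, volume_cube, volume_cube, mul_one]
  have hint : IntegrableOn f ((cube N) ×ˢ (cube r)) volume := by
    apply Measure.integrableOn_of_bounded (M := 1)
    · rw [hprod]; exact ENNReal.one_ne_top
    · exact hfm.aestronglyMeasurable
    · refine Filter.Eventually.of_forall fun z => ?_
      simp only [hf, Real.norm_eq_abs, abs_pow, abs_of_pos hq0]
      exact pow_le_one₀ hq0.le hq1.le
  have hpre : T ⁻¹' ((cube N) ×ˢ (cube r)) = cube (N+r) := by
    ext x
    simp only [Set.mem_preimage, hTx, Set.mem_prod, cube, Set.mem_pi, Set.mem_univ,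
      true_implies]
    constructor
    · rintro ⟨h1, h2⟩ a
      induction a using Fin.addCases with
      | left i => exact h1 i
      | right u => exact h2 u
    · intro h
      exact ⟨fun i => h _, fun u => h _⟩
  have hstep1 : Aint q N r = ∫ z in (cube N) ×ˢ (cube r), f z
      ∂((volume : Measure (Fin N → ℝ)).prod (volume : Measure (Fin r → ℝ))) := by
    rw [Aint, setIntegral_prod f (by rwa [← Measure.volume_eq_prod])]
    rfl
  have hstep2 : ∫ x in T ⁻¹' ((cube N) ×ˢ (cube r)), f (T x)
      = ∫ z in (cube N) ×ˢ (cube r), f z ∂(volume : Measure ((Fin N → ℝ) × (Fin r → ℝ))) :=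
    hT.setIntegral_preimage_emb T.measurableEmbedding f _
  rw [hstep1, ← Measure.volume_eq_prod, ← hstep2, hpre]
  rfl

lemma setIntegral_comp_perm (σ : Equiv.Perm (Fin (N+r))) :
    ∫ x in cube (N+r), Fcube q N r (fun a => x (σ a))
      = ∫ x in cube (N+r), Fcube q N r x := by
  let Tσ := MeasurableEquiv.piCongrLeft (fun _ : Fin (N+r) => ℝ) σ.symm
  have hps : MeasurePreserving Tσ :=
    volume_measurePreserving_piCongrLeft (fun _ : Fin (N+r) => ℝ) σ.symm
  have hTx : ∀ (x : Fin (N+r) → ℝ) (a : Fin (N+r)), Tσ x a = x (σ a) := by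
    intro x a
    simp [Tσ, MeasurableEquiv.piCongrLeft, Equiv.piCongrLeft]
  have hpre : Tσ ⁻¹' cube (N+r) = cube (N+r) := by
    ext x
    simp only [Set.mem_preimage, cube, Set.mem_pi, Set.mem_univ, true_implies]
    constructor
    · intro h a
      have := h (σ.symm a)
      rwa [hTx, Equiv.apply_symm_apply] at this
    · intro h a
      rw [hTx]
      exact h _
  have key := hps.setIntegral_preimage_emb Tσ.measurableEmbedding (Fcube q N r) (cube (N+r))
  rw [hpre] at key
  rw [← key]
  refine setIntegral_congr_fun (measurableSet_cube _) fun x _ => ?_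
  have : Tσ x = fun a => x (σ a) := funext fun a => hTx x a
  rw [this]

lemma sum_comp_eq (x : Fin (N+r) → ℝ) (hx : Function.Injective x) :
    ∑ σ : Equiv.Perm (Fin (N+r)), Fcube q N r (fun a => x (σ a))
      = ∑ τ : Equiv.Perm (Fin (N+r)), q ^ cPerm N r τ := by
  classical
  let ρ := Tuple.sort x
  have hsm : StrictMono (x ∘ ρ) :=
    (Tuple.monotone_sort x).strictMono_of_injective (hx.comp ρ.injective)
  have hlt : ∀ a b, x a < x b ↔ ρ.symm a < ρ.symm b := by
    intro a b
    have ha : x a = (x ∘ ρ) (ρ.symm a) := by simp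
    have hb : x b = (x ∘ ρ) (ρ.symm b) := by simp
    rw [ha, hb, hsm.lt_iff_lt]
  have hF : ∀ σ : Equiv.Perm (Fin (N+r)),
      Fcube q N r (fun a => x (σ a)) = q ^ cPerm N r (σ.trans ρ.symm) := by
    intro σ
    rw [Fcube, cPerm]
    congr 2
    ext p
    simp only [Finset.mem_filter, Finset.mem_univ, true_and, Equiv.trans_apply]
    rw [hlt]
    exact ⟨fun h => Finset.mem_filter.2 ⟨Finset.mem_univ _, h⟩, fun h => (Finset.mem_filter.1 h).2⟩
  rw [Finset.sum_congr rfl fun σ _ => hF σ]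
  exact Fintype.sum_bijective (fun σ : Equiv.Perm (Fin (N+r)) => σ.trans ρ.symm)
    ⟨fun a b h => by
      have := congrArg (fun e => Equiv.trans e ρ) h
      simpa [Equiv.trans_assoc] using this,
      fun τ => ⟨τ.trans ρ, by ext a; simp⟩⟩
    _ _ (fun σ => rfl)

lemma bad_null : volume {x : Fin (N+r) → ℝ | ¬ Function.Injective x} = 0 := by
  have hsub : {x : Fin (N+r) → ℝ | ¬ Function.Injective x} ⊆
      ⋃ (p : Fin (N+r) × Fin (N+r)) (_ : p.1 ≠ p.2), {x | x p.1 = x p.2} := by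
    intro x hx
    simp only [Set.mem_setOf_eq, Function.Injective] at hx
    push_neg at hx
    obtain ⟨a, b, hab, hne⟩ := hx
    exact Set.mem_iUnion.2 ⟨(a, b), Set.mem_iUnion.2 ⟨hne, hab⟩⟩
  refine measure_mono_null hsub (measure_iUnion_null fun p => measure_iUnion_null fun hp => ?_)
  have hker : {x : Fin (N+r) → ℝ | x p.1 = x p.2}
      = (LinearMap.ker ((LinearMap.proj p.1 : (Fin (N+r) → ℝ) →ₗ[ℝ] ℝ)
          - LinearMap.proj p.2) : Submodule ℝ (Fin (N+r) → ℝ)) := by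
    ext x
    simp only [Set.mem_setOf_eq, SetLike.mem_coe, LinearMap.mem_ker, LinearMap.sub_apply,
      LinearMap.proj_apply, sub_eq_zero]
  rw [hker]
  refine Measure.addHaar_submodule _ _ ?_
  intro htop
  have h1 : Pi.single p.1 (1:ℝ) ∈ (LinearMap.ker ((LinearMap.proj p.1 : (Fin (N+r) → ℝ) →ₗ[ℝ] ℝ)
      - LinearMap.proj p.2)) := htop ▸ Submodule.mem_top
  rw [LinearMap.mem_ker, LinearMap.sub_apply, LinearMap.proj_apply, LinearMap.proj_apply,
    Pi.single_eq_same, Pi.single_eq_of_ne (Ne.symm hp), sub_zero] at h1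
  exact one_ne_zero h1

lemma cube_integral_eq (hq0 : 0 < q) (hq1 : q < 1) :
    ((N+r).factorial : ℝ) * ∫ x in cube (N+r), Fcube q N r x
      = ∑ τ : Equiv.Perm (Fin (N+r)), q ^ cPerm N r τ := by
  classical
  have hint : ∀ σ : Equiv.Perm (Fin (N+r)),
      IntegrableOn (fun x => Fcube q N r (fun a => x (σ a))) (cube (N+r)) volume := by
    intro σ
    apply Measure.integrableOn_of_bounded (M := 1)
    · rw [volume_cube]; exact ENNReal.one_ne_top
    · exact ((measurable_Fcube q N r).comp
        (measurable_pi_lambda _ fun a => measurable_pi_apply _)).aestronglyMeasurable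
    · refine Filter.Eventually.of_forall fun z => ?_
      rw [Real.norm_eq_abs, abs_of_nonneg (Fcube_nonneg q N r hq0 _)]
      exact Fcube_le_one q N r hq0 hq1 _
  have h1 : ((N+r).factorial : ℝ) * ∫ x in cube (N+r), Fcube q N r x
      = ∑ σ : Equiv.Perm (Fin (N+r)), ∫ x in cube (N+r), Fcube q N r (fun a => x (σ a)) := by
    rw [Finset.sum_congr rfl fun σ _ => setIntegral_comp_perm q N r σ, Finset.sum_const,
      Finset.card_univ, Fintype.card_perm, Fintype.card_fin, nsmul_eq_mul]
  rw [h1, ← integral_finset_sum _ fun σ _ => hint σ]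
  have hae : ∀ᵐ x : Fin (N+r) → ℝ, Function.Injective x := by
    rw [ae_iff]
    exact bad_null N r
  have : ∫ x in cube (N+r), (∑ σ : Equiv.Perm (Fin (N+r)), Fcube q N r (fun a => x (σ a)))
      = ∫ _x in cube (N+r), (∑ τ : Equiv.Perm (Fin (N+r)), q ^ cPerm N r τ : ℝ) := by
    refine setIntegral_congr_ae (measurableSet_cube _) ?_
    filter_upwards [hae] with x hx _
    exact sum_comp_eq q N r x hx
  rw [this, setIntegral_const, measureReal_def, volume_cube]
  simp

/-- One-tail q-binomial identity:
`A_{N,r}(q) = C(N+r, r)⁻¹ · ∏_{j=1}^r (1 − q^{N+j})/(1 − q^j)`. -/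
theorem stmt_12 (q : ℝ) (hq0 : 0 < q) (hq1 : q < 1) (N r : ℕ) :
    Aint q N r =
      (1 / ((N + r).choose r : ℝ)) *
        ∏ j ∈ Finset.range r, (1 - q ^ (N + j + 1)) / (1 - q ^ (j + 1)) := by
  have hint := cube_integral_eq q N r hq0 hq1
  rw [Ksum_eq hq0 hq1 N r] at hint
  rw [aint_eq_cube q N r hq0 hq1]
  have hfac : ((N+r).factorial : ℝ) ≠ 0 := Nat.cast_ne_zero.2 (Nat.factorial_ne_zero _)
  have hchoosepos : 0 < (N+r).choose r := Nat.choose_pos (Nat.le_add_left r N)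
  have hch : ((N+r).choose r : ℝ) ≠ 0 := Nat.cast_ne_zero.2 hchoosepos.ne'
  have hmul : ((N+r).choose r : ℝ) * (r.factorial : ℝ) * (N.factorial : ℝ)
      = ((N+r).factorial : ℝ) := by
    have h := Nat.choose_mul_factorial_mul_factorial (Nat.le_add_left r N)
    rw [Nat.add_sub_cancel] at h
    exact_mod_cast congrArg (Nat.cast : ℕ → ℝ) h
  have h2 : ∫ x in cube (N+r), Fcube q N r x
      = (N.factorial * r.factorial
          * ∏ j ∈ Finset.range r, (1 - q ^ (N + j + 1)) / (1 - q ^ (j + 1)))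
        / (N+r).factorial := by
    rw [eq_div_iff hfac]
    linarith [hint]
  have hd : (∏ j ∈ Finset.range r, (1 - q ^ (j+1))) ≠ 0 :=
    Finset.prod_ne_zero_iff.2 fun j _ => one_sub_pow_ne hq0 hq1 j
  have hNf : (N.factorial : ℝ) ≠ 0 := Nat.cast_ne_zero.2 (Nat.factorial_ne_zero _)
  have hrf : (r.factorial : ℝ) ≠ 0 := Nat.cast_ne_zero.2 (Nat.factorial_ne_zero _)
  rw [h2, ← hmul, Finset.prod_div_distrib]
  field_simp

end
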